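/- Generalized Rodrigues formula: for m ≠ 0, n ∈ ℕ and x ≠ 0, eₙ^{(m)}(x) = x^{n+1} e^{−mx} · (dⁿ/dxⁿ)(x^{−1} e^{mx}). -/

import Mathlib

noncomputable def epoly (n : ℕ) (m : ℝ) (x : ℝ) : ℝ :=
  ∑ l ∈ Finset.range (n + 1),
    (-1 : ℝ) ^ (n + l) * m ^ l * ((n.factorial : ℝ) / (l.factorial : ℝ)) * x ^ l

open Finset Real

lemma epoly_rec (n : ℕ) (m x : ℝ) :
    epoly (n + 1) m x
      = x * (∑ l ∈ range (n + 1),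
          (-1 : ℝ) ^ (n + l) * m ^ l * ((n.factorial : ℝ) / (l.factorial : ℝ))
            * ((l : ℝ) * x ^ (l - 1)))
        + (m * x - (n + 1)) * epoly n m x := by
  have hx' : ∀ l : ℕ, x * ((l : ℝ) * x ^ (l - 1)) = (l : ℝ) * x ^ l := by
    intro l
    cases l with
    | zero => simp
    | succ k => simp [pow_succ]; ring
  have h1 : x * (∑ l ∈ range (n + 1),
      (-1 : ℝ) ^ (n + l) * m ^ l * ((n.factorial : ℝ) / (l.factorial : ℝ))
        * ((l : ℝ) * x ^ (l - 1)))
      = ∑ l ∈ range (n + 1),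
      (-1 : ℝ) ^ (n + l) * m ^ l * ((n.factorial : ℝ) / (l.factorial : ℝ))
        * ((l : ℝ) * x ^ l) := by
    rw [Finset.mul_sum]
    refine Finset.sum_congr rfl fun l _ => ?_
    rw [show ∀ a b : ℝ, x * (a * b) = a * (x * b) from fun a b => by ring, hx' l]
  rw [h1]
  have hL : epoly (n + 1) m x = ∑ l ∈ Finset.range (n + 2),
      (((l : ℝ) - (n + 1)) * ((-1 : ℝ) ^ (n + l) * m ^ l
          * ((n.factorial : ℝ) / (l.factorial : ℝ))) * x ^ l
        + (if l = 0 then 0 else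
            m * ((-1 : ℝ) ^ (n + (l - 1)) * m ^ (l - 1)
              * ((n.factorial : ℝ) / ((l - 1).factorial : ℝ))) * x ^ l)) := by
    unfold epoly
    refine Finset.sum_congr rfl fun l _ => ?_
    cases l with
    | zero =>
      simp [pow_succ, Nat.factorial_succ]
      ring
    | succ k =>
      simp only [if_neg (Nat.succ_ne_zero k), Nat.succ_sub_one]
      have hk : (k.factorial : ℝ) ≠ 0 := Nat.cast_ne_zero.mpr k.factorial_ne_zero
      have hk1 : ((k + 1).factorial : ℝ) ≠ 0 := Nat.cast_ne_zero.mpr (k + 1).factorial_ne_zero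
      rw [show n + 1 + (k + 1) = (n + k) + 2 from by ring, show n + (k + 1) = (n + k) + 1 from rfl]
      rw [pow_succ ((-1 : ℝ)) ((n + k) + 1), pow_succ ((-1 : ℝ)) (n + k)]
      rw [Nat.factorial_succ (n), Nat.factorial_succ k]
      push_cast
      field_simp
      ring
  have hS1 : (∑ l ∈ Finset.range (n + 2),
      ((l : ℝ) - (n + 1)) * ((-1 : ℝ) ^ (n + l) * m ^ l
        * ((n.factorial : ℝ) / (l.factorial : ℝ))) * x ^ l)
      = ∑ l ∈ Finset.range (n + 1),
      ((l : ℝ) - (n + 1)) * ((-1 : ℝ) ^ (n + l) * m ^ l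
        * ((n.factorial : ℝ) / (l.factorial : ℝ))) * x ^ l := by
    rw [Finset.sum_range_succ]
    push_cast
    rw [sub_self, zero_mul, zero_mul, add_zero]
  have hS2 : (∑ l ∈ Finset.range (n + 2),
      (if l = 0 then (0 : ℝ) else
        m * ((-1 : ℝ) ^ (n + (l - 1)) * m ^ (l - 1)
          * ((n.factorial : ℝ) / ((l - 1).factorial : ℝ))) * x ^ l))
      = ∑ l ∈ Finset.range (n + 1),
        m * ((-1 : ℝ) ^ (n + l) * m ^ l
          * ((n.factorial : ℝ) / (l.factorial : ℝ))) * x ^ (l + 1) := by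
    rw [Finset.sum_range_succ']
    simp
  rw [hL, Finset.sum_add_distrib, hS1, hS2]
  unfold epoly
  rw [Finset.mul_sum, ← Finset.sum_add_distrib, ← Finset.sum_add_distrib]
  refine Finset.sum_congr rfl fun l hl => ?_
  rw [pow_succ x l]
  ring

lemma key (n : ℕ) (m : ℝ) : ∀ x : ℝ, x ≠ 0 →
    iteratedDeriv n (fun y => y⁻¹ * Real.exp (m * y)) x
      = epoly n m x * x ^ (-(n + 1 : ℤ)) * Real.exp (m * x) := by
  induction n with
  | zero =>
    intro x hx
    simp [epoly, iteratedDeriv_zero, zpow_neg, zpow_one]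
  | succ n ih =>
    intro x hx
    rw [iteratedDeriv_succ]
    have hev : iteratedDeriv n (fun y => y⁻¹ * Real.exp (m * y))
        =ᶠ[nhds x] fun y => epoly n m y * y ^ (-(n + 1 : ℤ)) * Real.exp (m * y) := by
      filter_upwards [isOpen_compl_singleton.mem_nhds hx] with y hy
      exact ih y hy
    rw [hev.deriv_eq]
    set P : ℝ := ∑ l ∈ range (n + 1),
      (-1 : ℝ) ^ (n + l) * m ^ l * ((n.factorial : ℝ) / (l.factorial : ℝ))
        * ((l : ℝ) * x ^ (l - 1)) with hP
    have hepoly : HasDerivAt (fun y => epoly n m y) P x := by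
      unfold epoly
      rw [hP]
      exact HasDerivAt.fun_sum fun l _ => (hasDerivAt_pow l x).const_mul _
    have hzpow := hasDerivAt_zpow (-(n + 1 : ℤ)) x (Or.inl hx)
    have hexp : HasDerivAt (fun y : ℝ => Real.exp (m * y)) (Real.exp (m * x) * m) x := by
      simpa using (((hasDerivAt_id x).const_mul m)).exp
    have hd := ((hepoly.fun_mul hzpow).fun_mul hexp).deriv
    rw [hd]
    have hxz : x ^ (-(n + 1 : ℤ)) = x * x ^ (-(n + 2 : ℤ)) := by
      rw [← zpow_one_add₀ hx]
      congr 1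
    have hxz2 : x ^ (-(n + 1 : ℤ) - 1) = x ^ (-(n + 2 : ℤ)) := by
      congr 1
    have hrec := epoly_rec n m x
    rw [← hP] at hrec
    rw [show (-(↑(n + 1) + 1 : ℤ)) = -(n + 2 : ℤ) from by push_cast; ring]
    rw [hrec, hxz, hxz2]
    push_cast
    ring

theorem stmt18 (n : ℕ) (m : ℝ) (hm : m ≠ 0) (x : ℝ) (hx : x ≠ 0) :
    epoly n m x = x ^ (n + 1) * Real.exp (-(m * x)) *
      iteratedDeriv n (fun y => y⁻¹ * Real.exp (m * y)) x := by
  rw [key n m x hx, Real.exp_neg]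
  have h2 : Real.exp (m * x) ≠ 0 := Real.exp_ne_zero _
  have h1 : (x : ℝ) ^ (n + 1) * x ^ (-(n + 1 : ℤ)) = 1 := by
    rw [← zpow_natCast x (n + 1), ← zpow_add₀ hx,
      show ((n + 1 : ℕ) : ℤ) + (-(n + 1 : ℤ)) = 0 from by push_cast; ring, zpow_zero]
  symm
  calc x ^ (n + 1) * (Real.exp (m * x))⁻¹ * (epoly n m x * x ^ (-(n + 1 : ℤ)) * Real.exp (m * x))
      = (x ^ (n + 1) * x ^ (-(n + 1 : ℤ))) * ((Real.exp (m * x))⁻¹ * Real.exp (m * x))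
        * epoly n m x := by ring
    _ = epoly n m x := by rw [h1, inv_mul_cancel₀ h2, one_mul, one_mul]
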